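/- Suppose τ𝒳 = 𝒳. Let M be an object of 𝖳, let M → X_M → P → ΣM be a distinguished triangle in which M → X_M is an 𝒳-preenvelope, and let Σ^{-1}P → W → X^P → P be a distinguished triangle in which X^P → P is an 𝒳-precover. Then M and W become isomorphic in the quotient by 𝒳: there exist morphisms f : M → W and g : W → M such that id_M − g∘f factors through an object of 𝒳 and id_W − f∘g factors through an object of 𝒳. (This expresses the natural isomorphism ωσ ≅ id underlying Theorem 2.3: if τ𝒳 = 𝒳, then the pretriangulated quotient category 𝖳_𝒳 is triangulated.) -/

import Mathlib

/-!
STATEMENT 12.  Same setup as Lemma 2.2, with `τ𝒳 = 𝒳`.  Let `M → X_M → P → ΣM` be a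
distinguished triangle in which `M → X_M` is an `𝒳`-preenvelope, and let
`Σ⁻¹P → W → X^P → P` be a distinguished triangle (written in rotated form
`W → X^P → P → ΣW`) in which `X^P → P` is an `𝒳`-precover.  Then `M` and `W` become
isomorphic in the quotient by `𝒳` (the natural isomorphism `ωσ ≅ id` underlying
Theorem 2.3).
-/

open CategoryTheory CategoryTheory.Limits CategoryTheory.Pretriangulated

/-- A morphism factors through (some object of) the class `𝒳`. -/
def FactorsThroughClass {C : Type*} [Category C] (𝒳 : Set C) {A B : C} (f : A ⟶ B) : Prop :=
  ∃ (X : C) (g : A ⟶ X) (h : X ⟶ B), X ∈ 𝒳 ∧ g ≫ h = f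

/-- `f : A ⟶ B` is an `𝒳`-monomorphism: every morphism from `A` to an object of `𝒳`
factors through `f`. -/
def XMono {C : Type*} [Category C] (𝒳 : Set C) {A B : C} (f : A ⟶ B) : Prop :=
  ∀ (X : C), X ∈ 𝒳 → ∀ (g : A ⟶ X), ∃ h : B ⟶ X, f ≫ h = g

/-- `f : A ⟶ B` is an `𝒳`-epimorphism: every morphism from an object of `𝒳` to `B`
factors through `f`. -/
def XEpi {C : Type*} [Category C] (𝒳 : Set C) {A B : C} (f : A ⟶ B) : Prop :=
  ∀ (X : C), X ∈ 𝒳 → ∀ (g : X ⟶ B), ∃ h : X ⟶ A, h ≫ f = g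

/-- The data of a Serre functor `S` on a `k`-linear category: a `k`-linear autoequivalence
together with isomorphisms `Hom(A,B) ≅ Hom(B, S A)^∨`, natural in `A` and `B`. -/
structure SerreFunctorData (k : Type*) [Field k] (C : Type*) [Category C]
    [Preadditive C] [Linear k C] where
  S : C ⥤ C
  additive : S.Additive
  linear : S.Linear k
  isEquivalence : S.IsEquivalence
  pairing : ∀ A B : C, (A ⟶ B) ≃ₗ[k] Module.Dual k (B ⟶ S.obj A)
  natB : ∀ {A B B' : C} (f : A ⟶ B) (g : B ⟶ B') (h : B' ⟶ S.obj A),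
    pairing A B' (f ≫ g) h = pairing A B f (g ≫ h)
  natA : ∀ {A A' B : C} (e : A' ⟶ A) (f : A ⟶ B) (h : B ⟶ S.obj A'),
    pairing A' B (e ≫ f) h = pairing A B f (h ≫ S.map e)


/-- If `T` is distinguished and `T.mor₃ ≫ u⟦1⟧' = 0`, then `u` factors through `T.mor₁`. -/
lemma factor_through_mor₁ {C : Type*} [Category C] [Preadditive C] [HasZeroObject C]
    [HasShift C ℤ] [∀ n : ℤ, (CategoryTheory.shiftFunctor C n).Additive] [Pretriangulated C]
    {A B Z Y : C} (m1 : A ⟶ B) (m2 : B ⟶ Z) (m3 : Z ⟶ A⟦(1 : ℤ)⟧)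
    (hT : Triangle.mk m1 m2 m3 ∈ distTriang C) (u : A ⟶ Y)
    (hu : m3 ≫ u⟦(1 : ℤ)⟧' = 0) :
    ∃ w : B ⟶ Y, m1 ≫ w = u := by
  obtain ⟨g, hg⟩ := Triangle.yoneda_exact₃ _ (rot_of_distTriang _ hT)
    (u⟦(1 : ℤ)⟧' : A⟦(1 : ℤ)⟧ ⟶ Y⟦(1 : ℤ)⟧) hu
  dsimp [Triangle.rotate] at hg
  refine ⟨(shiftFunctor C (1 : ℤ)).preimage (-g), (shiftFunctor C (1 : ℤ)).map_injective ?_⟩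
  simp only [Functor.map_comp, Functor.map_preimage, hg]
  erw [Functor.map_preimage]
  simp
  exact (Preadditive.comp_neg _ _).trans (Preadditive.neg_comp _ _).symm

theorem omega_sigma_iso_id_in_quotient
    (k : Type*) [Field k] [IsAlgClosed k]
    {C : Type*} [Category C] [Preadditive C] [Linear k C] [HasZeroObject C]
    [HasShift C ℤ] [∀ n : ℤ, (CategoryTheory.shiftFunctor C n).Additive]
    [Pretriangulated C] [HasBinaryBiproducts C]
    [∀ A B : C, FiniteDimensional k (A ⟶ B)] [IsIdempotentComplete C]
    (SD : SerreFunctorData k C)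
    (𝒳 : Set C)
    (hiso : ∀ {A B : C}, (A ≅ B) → A ∈ 𝒳 → B ∈ 𝒳)
    (hsum : ∀ {A B : C}, A ∈ 𝒳 → B ∈ 𝒳 → (A ⊞ B) ∈ 𝒳)
    (hsummand : ∀ {A B : C} (i : A ⟶ B) (r : B ⟶ A), i ≫ r = 𝟙 A → B ∈ 𝒳 → A ∈ 𝒳)
    -- `τ𝒳 = 𝒳`, where `τ = Σ⁻¹ ∘ S`:
    (hτ : ∀ X : C, X ∈ 𝒳 ↔ ((SD.S.obj X)⟦(-1 : ℤ)⟧) ∈ 𝒳)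
    -- the distinguished triangle `M → X_M → P → ΣM` with `M → X_M` an `𝒳`-preenvelope:
    (M XM P : C) (e : M ⟶ XM) (gP : XM ⟶ P) (hP : P ⟶ M⟦(1 : ℤ)⟧)
    (hXM : XM ∈ 𝒳) (he : XMono 𝒳 e)
    (hT : Triangle.mk e gP hP ∈ distTriang C)
    -- the distinguished triangle `Σ⁻¹P → W → X^P → P`, in rotated form `W → X^P → P → ΣW`,
    -- with `X^P → P` an `𝒳`-precover:
    (W XP : C) (a : W ⟶ XP) (p : XP ⟶ P) (δ : P ⟶ W⟦(1 : ℤ)⟧)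
    (hXP : XP ∈ 𝒳) (hp : XEpi 𝒳 p)
    (hT' : Triangle.mk a p δ ∈ distTriang C) :
    ∃ (f : M ⟶ W) (g : W ⟶ M),
      FactorsThroughClass 𝒳 (𝟙 M - f ≫ g) ∧ FactorsThroughClass 𝒳 (𝟙 W - g ≫ f) := by

  -- Step 0: any map from an object of `𝒳` to `P` composed with `hP` is zero.
  have ghost : ∀ (X : C), X ∈ 𝒳 → ∀ u : X ⟶ P, u ≫ hP = 0 := by
    intro X hX u
    apply (SD.pairing X (M⟦(1 : ℤ)⟧)).injective
    rw [map_zero]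
    apply LinearMap.ext
    intro v
    rw [SD.natB u hP v]
    -- show `hP ≫ v = 0`
    have hτX : ((SD.S.obj X)⟦(-1 : ℤ)⟧) ∈ 𝒳 := (hτ X).mp hX
    set v' : M ⟶ (SD.S.obj X)⟦(-1 : ℤ)⟧ :=
      (shiftEquiv C (1 : ℤ)).unitIso.hom.app M ≫ v⟦(-1 : ℤ)⟧' with hv'
    obtain ⟨w, hw⟩ := he _ hτX v'
    have hzero : hP⟦(-1 : ℤ)⟧' ≫ (shiftEquiv C (1 : ℤ)).unitIso.inv.app M ≫ e = 0 := by
      have := comp_distTriang_mor_zero₁₂ _ (inv_rot_of_distTriang _ hT)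
      dsimp [Triangle.invRotate] at this
      have h2 : (-(hP⟦(-1 : ℤ)⟧' ≫ (shiftEquiv C (1 : ℤ)).unitIso.inv.app M)) ≫ e = 0 := this
      rw [Preadditive.neg_comp, neg_eq_zero] at h2
      exact (Category.assoc _ _ _).symm.trans h2
    have hPv : hP ≫ v = 0 := by
      apply (shiftFunctor C (-1 : ℤ)).map_injective
      rw [Functor.map_comp, Functor.map_zero]
      have : v⟦(-1 : ℤ)⟧' = (shiftEquiv C (1 : ℤ)).unitIso.inv.app M ≫ v' := by
        rw [hv']; exact ((shiftEquiv C (1 : ℤ)).unitIso.inv_hom_id_app_assoc M _).symm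
      rw [this, ← hw]; exact (congrArg (fun t => hP⟦(-1 : ℤ)⟧' ≫ t) (Category.assoc _ e w).symm).trans (((reassoc_of% hzero) w).trans zero_comp)
    rw [hPv, map_zero, LinearMap.zero_apply]
  -- Step 1: factor `gP` through the precover `p`.
  obtain ⟨q, hq⟩ := hp XM hXM gP
  -- Step 2: complete to a morphism of triangles to get `f : M ⟶ W`.
  obtain ⟨f, hf₁, hf₂⟩ := complete_distinguished_triangle_morphism₁ _ _ hT hT' q (𝟙 P)
    ((Category.comp_id gP).trans hq.symm)
  replace hf₂ : hP ≫ f⟦(1 : ℤ)⟧' = δ := hf₂.trans (Category.id_comp δ)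
  -- Step 3: factor `p` through `gP` using the ghost property.
  obtain ⟨r, hr⟩ := Triangle.coyoneda_exact₃ _ hT p (ghost XP hXP p)
  -- Step 4: complete to a morphism of triangles to get `g : W ⟶ M`.
  obtain ⟨g, hg₁, hg₂⟩ := complete_distinguished_triangle_morphism₁ _ _ hT' hT r (𝟙 P)
    ((Category.comp_id p).trans hr)
  replace hg₂ : δ ≫ g⟦(1 : ℤ)⟧' = hP := hg₂.trans (Category.id_comp hP)
  dsimp only [Triangle.mk] at f g
  refine ⟨f, g, ?_, ?_⟩
  · -- `𝟙 M - f ≫ g` factors through `XM`.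
    obtain ⟨w, hw⟩ := factor_through_mor₁ e gP hP hT (𝟙 M - f ≫ g) (by
      rw [Functor.map_sub, Functor.map_comp, CategoryTheory.Functor.map_id, Preadditive.comp_sub, Category.comp_id,
        ← Category.assoc]
      erw [hf₂, hg₂]
      rw [sub_self])
    exact ⟨XM, e, w, hXM, hw⟩
  · -- `𝟙 W - g ≫ f` factors through `XP`.
    obtain ⟨w, hw⟩ := factor_through_mor₁ a p δ hT' (𝟙 W - g ≫ f) (by
      rw [Functor.map_sub, Functor.map_comp, CategoryTheory.Functor.map_id, Preadditive.comp_sub, Category.comp_id,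
        ← Category.assoc]
      erw [hg₂, hf₂]
      rw [sub_self])
    exact ⟨XP, a, w, hXP, hw⟩
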